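/- For every n and every k with 0 ≤ k ≤ n, there exists an exact unitary OBDD (in fact a reversible deterministic OBDD, i.e., using only permutation matrices) of width max{k+1, n−k+1} computing EXACT_n^k. -/

import Mathlib

/-- Number of 1s in the input. -/
def countOnes {n : ℕ} (x : Fin n → Bool) : ℕ :=
  (Finset.univ.filter fun i => x i = true).card

/-- Run of a reversible deterministic OBDD of width `d`: the bits are read in
order `π`, and at step `j` the permutation `P j b` of the `d` states is applied,
where `b` is the value of the tested variable. -/
def revRun {n d : ℕ} (P : Fin n → Bool → Equiv.Perm (Fin d))
    (π : Equiv.Perm (Fin n)) (s0 : Fin d) (x : Fin n → Bool) : Fin d :=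
  (List.ofFn fun j : Fin n => P j (x (π j))).foldl (fun s p => p s) s0

lemma foldl_addLeft {d : ℕ} [NeZero d] (l : List (Fin d)) (s : Fin d) :
    (l.map (fun a => Equiv.addLeft a)).foldl (fun s p => p s) s = l.sum + s := by
  induction l generalizing s with
  | nil => simp
  | cons a t ih =>
      simp only [List.map_cons, List.foldl_cons, List.sum_cons, ih]
      simp [Equiv.coe_addLeft]
      abel

open Fin.CommRing in
/-- For every `n` and every `k ≤ n`, there exists a reversible deterministic OBDD
(transitions are permutations of the state set, hence an exact unitary OBDD) of
width `max (k+1) (n-k+1)` computing `EXACT_n^k`. -/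
theorem exists_reversible_obdd_exact (n k : ℕ) (hk : k ≤ n) :
    ∃ (π : Equiv.Perm (Fin n))
      (P : Fin n → Bool → Equiv.Perm (Fin (max (k + 1) (n - k + 1))))
      (s0 : Fin (max (k + 1) (n - k + 1)))
      (acc : Finset (Fin (max (k + 1) (n - k + 1)))),
      ∀ x : Fin n → Bool, (revRun P π s0 x ∈ acc ↔ countOnes x = k) := by
  set d := max (k + 1) (n - k + 1) with hd
  have hdpos : 0 < d := lt_of_lt_of_le (Nat.succ_pos k) (le_max_left _ _)
  haveI : NeZero d := ⟨hdpos.ne'⟩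
  refine ⟨1, fun _ b => Equiv.addLeft (if b then (1 : Fin d) else 0), 0,
    {(k : Fin d)}, ?_⟩
  intro x
  have hrun : revRun (fun _ b => Equiv.addLeft (if b then (1 : Fin d) else 0)) 1 0 x
      = ((countOnes x : ℕ) : Fin d) := by
    unfold revRun
    have : (List.ofFn fun j : Fin n =>
        Equiv.addLeft (if x ((1 : Equiv.Perm (Fin n)) j) then (1 : Fin d) else 0))
        = (List.ofFn fun j : Fin n => if x j then (1 : Fin d) else 0).map
          (fun a => Equiv.addLeft a) := by
      rw [List.map_ofFn]
      rfl
    rw [this, foldl_addLeft, add_zero, List.sum_ofFn]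
    have : (∑ j : Fin n, if x j then (1 : Fin d) else 0)
        = ((Finset.univ.filter fun i => x i = true).card : Fin d) := by
      rw [← Finset.sum_boole]
    rw [this]
    rfl
  rw [hrun]
  have hle : countOnes x ≤ n := by
    have := Finset.card_filter_le (Finset.univ : Finset (Fin n)) (fun i => x i = true)
    simpa [countOnes] using this
  constructor
  · intro h
    simp only [Finset.mem_singleton] at h
    have hv : countOnes x % d = k % d := by
      have := congrArg Fin.val h
      simpa [Fin.val_natCast] using this
    have hkd : k < d := lt_of_lt_of_le (Nat.lt_succ_self k) (le_max_left _ _)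
    rw [Nat.mod_eq_of_lt hkd] at hv
    have hdn : n - k + 1 ≤ d := le_max_right _ _
    rcases lt_or_ge (countOnes x) d with h1 | h1
    · rwa [Nat.mod_eq_of_lt h1] at hv
    · exfalso
      have h2 : countOnes x - d < d := by omega
      have h3 : countOnes x % d = countOnes x - d := by
        rw [Nat.mod_eq_sub_mod h1, Nat.mod_eq_of_lt h2]
      omega
  · intro h
    simp [h]
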